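/- arXiv:2212.05430 — 7 statements merged into one kernel-verified Lean document; each statement's English description precedes it below -/
import Mathlib

section
/- Fix w* ∈ ℝ^d, β_max > 0, β₁ > 0, ξ > 1, and for every β ∈ (0, β_max] fix constants λ_β > 0, Λ_β ≥ 0 satisfying 2Λ_β/λ_β ≤ 1/√(ξβ). Suppose for each β ∈ (0, β_max] and each u ∈ B₂(w*, 1/√β) there is a twice continuously differentiable function Q_β(·|u) : ℝ^d → ℝ with ∇²Q_β(·|u)(v) ⪰ λ_β·I for all v ∈ B₂(w*, 1/√β) and ‖∇Q_β(·|u)(w*)‖₂ ≤ Λ_β. Let sequences (ŵ^t) and (β_t) satisfy: β_{t+1} = ξ·β_t, β₁·‖ŵ¹ − w*‖₂² ≤ 1, and for every t with β_t ≤ β_max, ŵ^{t+1} ∈ B₂(w*, 1/√β_t) and Q_{β_t}(ŵ^{t+1}|ŵ^t) ≤ Q_{β_t}(w*|ŵ^t). Then for every t with β_t ≤ β_max one has β_t·‖ŵ^t − w*‖₂² ≤ 1; consequently, for any ε > 1/β_max, ‖ŵ^T − w*‖₂² ≤ ε whenever T ≥ 1 + log(1/(ε·β₁))/log ξ and β_T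 ≤ β_max. -/
open Set Metric

lemma taylor_lb {E : Type*} [NormedAddCommGroup E] [InnerProductSpace ℝ E] [CompleteSpace E]
    (f : E → ℝ) (hf : ContDiff ℝ 2 f) (lam : ℝ)
    {s : Set E} (hs : Convex ℝ s) {a b : E} (ha : a ∈ s) (hb : b ∈ s)
    (hH : ∀ v ∈ s, lam * ‖b - a‖ ^ 2 ≤ iteratedFDeriv ℝ 2 f v ![b - a, b - a]) :
    f a + inner ℝ (gradient f a) (b - a) + lam / 2 * ‖b - a‖ ^ 2 ≤ f b := by
  set z := b - a with hz
  set c : ℝ → E := fun t => a + t • z with hc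
  have hc0 : c 0 = a := by simp [hc]
  have hc1 : c 1 = b := by simp [hc, hz]
  have hcder : ∀ t : ℝ, HasDerivAt c z t := by
    intro t
    simpa [hc] using (((hasDerivAt_id t).smul_const z).const_add a)
  have hdf : Differentiable ℝ f := hf.differentiable (by norm_num)
  set D : ℝ → ℝ := fun t => fderiv ℝ f (c t) z with hD
  have hg : ∀ t : ℝ, HasDerivAt (f ∘ c) (D t) t := fun t =>
    (hdf (c t)).hasFDerivAt.comp_hasDerivAt t (hcder t)
  have hF1 : ContDiff ℝ 1 (fderiv ℝ f) := hf.fderiv_right (le_refl _)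
  have hDder : ∀ t : ℝ, HasDerivAt D ((fderiv ℝ (fderiv ℝ f) (c t) z) z) t := by
    intro t
    exact (((ContinuousLinearMap.apply ℝ ℝ z).hasFDerivAt.comp _
      ((hF1.differentiable one_ne_zero (c t)).hasFDerivAt)).comp_hasDerivAt t (hcder t))
  have hmem : ∀ t ∈ Icc (0:ℝ) 1, c t ∈ s := fun t ht => hs.add_smul_sub_mem ha hb ht
  -- Step 1: D t - D 0 ≥ lam ‖z‖² t on [0,1]
  have step1 : ∀ t ∈ Icc (0:ℝ) 1, lam * ‖z‖ ^ 2 * (t - 0) ≤ D t - D 0 := by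
    intro t ht
    refine (convex_Icc 0 1).mul_sub_le_image_sub_of_le_deriv
      (fun u _ => (hDder u).continuousAt.continuousWithinAt)
      (fun u _ => ((hDder u).differentiableAt).differentiableWithinAt)
      (fun u hu => ?_) 0 (by constructor <;> norm_num) t ht ht.1
    rw [(hDder u).deriv]
    have := hH (c u) (hmem u (interior_subset hu))
    rwa [iteratedFDeriv_two_apply] at this
  -- Step 2: monotonicity of φ
  set φ : ℝ → ℝ := fun t => f (c t) - t * D 0 - t ^ 2 * (lam / 2 * ‖z‖ ^ 2) with hφ
  have hφder : ∀ t : ℝ, HasDerivAt φ (D t - D 0 - 2 * t * (lam / 2 * ‖z‖ ^ 2)) t := by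
    intro t
    have h1 : HasDerivAt (fun t : ℝ => t * D 0) (D 0) t := by
      simpa using (hasDerivAt_id t).mul_const (D 0)
    have h2 : HasDerivAt (fun t : ℝ => t ^ 2 * (lam / 2 * ‖z‖ ^ 2))
        (2 * t * (lam / 2 * ‖z‖ ^ 2)) t := by
      have := (hasDerivAt_pow 2 t).mul_const (lam / 2 * ‖z‖ ^ 2)
      exact this.congr_deriv (by norm_num)
    exact ((hg t).sub h1).sub h2
  have hmono : MonotoneOn φ (Icc 0 1) := by
    refine monotoneOn_of_deriv_nonneg (convex_Icc 0 1)
      (fun u _ => (hφder u).continuousAt.continuousWithinAt)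
      (fun u _ => ((hφder u).differentiableAt).differentiableWithinAt)
      (fun u hu => ?_)
    rw [(hφder u).deriv]
    have h1 := step1 u (interior_subset hu)
    nlinarith [h1]
  have hfin := hmono (left_mem_Icc.2 (by norm_num)) (right_mem_Icc.2 (by norm_num)) zero_le_one
  have hD0 : D 0 = inner ℝ (gradient f a) z := by
    have hgr : gradient f a = (InnerProductSpace.toDual ℝ E).symm (fderiv ℝ f a) := rfl
    rw [hgr, InnerProductSpace.toDual_symm_apply]
    show (fderiv ℝ f (c 0)) z = (fderiv ℝ f a) z
    rw [hc0]
  simp only [hφ, hc0, hc1] at hfin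
  rw [hD0] at hfin
  nlinarith [hfin]

/-- SVAM convergence (Theorem 1, deterministic form). Under LWSC/LWLC with constants
`lam β`, `Lam β` satisfying `2Λ_β/λ_β ≤ 1/√(ξβ)` for all `β ∈ (0, β_max]`, if the iterates
satisfy `β_{t+1} = ξ β_t`, `β₁·‖ŵ¹ − w*‖² ≤ 1`, and each new iterate lies in the ball of
radius `1/√β_t` around `w*` and does not increase `Q_{β_t}(·|ŵ^t)` beyond its value at `w*`,
then the invariant `β_t·‖ŵ^t − w*‖² ≤ 1` is maintained, and `‖ŵ^T − w*‖² ≤ ε` whenever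
`T ≥ 1 + log(1/(ε β₁))/log ξ` and `β_T ≤ β_max`. -/
theorem stmt1
    {d : ℕ} (wstar : EuclideanSpace ℝ (Fin d))
    (βmax : ℝ) (hβmax : 0 < βmax)
    (ξ : ℝ) (hξ : 1 < ξ)
    (lam Lam : ℝ → ℝ)
    (hlam : ∀ β ∈ Ioc (0:ℝ) βmax, 0 < lam β)
    (hLam : ∀ β ∈ Ioc (0:ℝ) βmax, 0 ≤ Lam β)
    (hratio : ∀ β ∈ Ioc (0:ℝ) βmax, 2 * Lam β / lam β ≤ 1 / Real.sqrt (ξ * β))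
    (Q : ℝ → EuclideanSpace ℝ (Fin d) → EuclideanSpace ℝ (Fin d) → ℝ)
    (hQsmooth : ∀ β ∈ Ioc (0:ℝ) βmax, ∀ u ∈ closedBall wstar (1 / Real.sqrt β),
      ContDiff ℝ 2 (Q β u))
    (hLWSC : ∀ β ∈ Ioc (0:ℝ) βmax, ∀ u ∈ closedBall wstar (1 / Real.sqrt β),
      ∀ v ∈ closedBall wstar (1 / Real.sqrt β),
      ∀ z : EuclideanSpace ℝ (Fin d),
        lam β * ‖z‖ ^ 2 ≤ iteratedFDeriv ℝ 2 (Q β u) v ![z, z])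
    (hLWLC : ∀ β ∈ Ioc (0:ℝ) βmax, ∀ u ∈ closedBall wstar (1 / Real.sqrt β),
      ‖gradient (Q β u) wstar‖ ≤ Lam β)
    (w : ℕ → EuclideanSpace ℝ (Fin d)) (β : ℕ → ℝ)
    (hβ0 : 0 < β 0)
    (hβrec : ∀ t, β (t + 1) = ξ * β t)
    (hinit : β 0 * ‖w 0 - wstar‖ ^ 2 ≤ 1)
    (hstep : ∀ t, β t ≤ βmax →
      w (t + 1) ∈ closedBall wstar (1 / Real.sqrt (β t)) ∧
      Q (β t) (w t) (w (t + 1)) ≤ Q (β t) (w t) wstar) :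
    (∀ t, β t ≤ βmax → β t * ‖w t - wstar‖ ^ 2 ≤ 1) ∧
    (∀ ε : ℝ, 1 / βmax < ε → ∀ T : ℕ,
      1 + Real.log (1 / (ε * β 0)) / Real.log ξ ≤ (T : ℝ) → β T ≤ βmax →
      ‖w T - wstar‖ ^ 2 ≤ ε) := by

  have hξ0 : (0:ℝ) < ξ := lt_trans one_pos hξ
  have hβpos : ∀ t, 0 < β t := by
    intro t; induction t with
    | zero => exact hβ0
    | succ n ih => rw [hβrec]; positivity
  -- the invariant
  have inv : ∀ t, β t ≤ βmax → β t * ‖w t - wstar‖ ^ 2 ≤ 1 := by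
    intro t
    induction t with
    | zero => intro _; exact hinit
    | succ n ih =>
      intro hle
      have hβn : β n ≤ βmax := by
        have h1 : β n < β (n + 1) := by
          rw [hβrec]
          nlinarith [hβpos n]
        linarith
      have hβnIoc : β n ∈ Ioc (0:ℝ) βmax := ⟨hβpos n, hβn⟩
      have invn := ih hβn
      have hsqrtpos : 0 < Real.sqrt (β n) := Real.sqrt_pos.2 (hβpos n)
      -- w n is in the ball
      have hwn : w n ∈ closedBall wstar (1 / Real.sqrt (β n)) := by
        rw [mem_closedBall, dist_eq_norm]
        have h2 : ‖w n - wstar‖ ^ 2 ≤ 1 / β n := by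
          rw [le_div_iff₀ (hβpos n)]; linarith [invn]
        have h3 : ‖w n - wstar‖ ≤ Real.sqrt (1 / β n) := by
          rw [← Real.sqrt_sq (norm_nonneg _)]
          exact Real.sqrt_le_sqrt h2
        rwa [one_div, Real.sqrt_inv, ← one_div] at h3
      have hwstar : wstar ∈ closedBall wstar (1 / Real.sqrt (β n)) := by
        rw [mem_closedBall, dist_self]; positivity
      obtain ⟨hball, hQle⟩ := hstep n hβn
      -- apply the Taylor lower bound
      have key := taylor_lb (Q (β n) (w n)) (hQsmooth _ hβnIoc _ hwn) (lam (β n))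
        (convex_closedBall wstar (1 / Real.sqrt (β n))) hwstar hball
        (fun v hv => hLWSC _ hβnIoc _ hwn v hv _)
      set r := ‖w (n + 1) - wstar‖ with hr
      have hrnn : 0 ≤ r := norm_nonneg _
      have hinner : -(Lam (β n) * r) ≤ inner ℝ (gradient (Q (β n) (w n)) wstar) (w (n + 1) - wstar) := by
        have h4 := abs_real_inner_le_norm (gradient (Q (β n) (w n)) wstar) (w (n + 1) - wstar)
        have h5 := hLWLC _ hβnIoc _ hwn
        have h6 : |(inner ℝ (gradient (Q (β n) (w n)) wstar) (w (n + 1) - wstar) : ℝ)| ≤ Lam (β n) * r := by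
          refine le_trans h4 ?_
          exact mul_le_mul_of_nonneg_right h5 hrnn
        linarith [neg_abs_le (inner ℝ (gradient (Q (β n) (w n)) wstar) (w (n + 1) - wstar) : ℝ)]
      have hlampos := hlam _ hβnIoc
      have hkey2 : lam (β n) / 2 * r ^ 2 ≤ Lam (β n) * r := by nlinarith [key, hQle, hinner]
      -- r ≤ 2 Λ / λ ≤ 1/√(ξ β n)
      have hξβ : 0 < ξ * β n := mul_pos hξ0 (hβpos n)
      have hrle : r ≤ 1 / Real.sqrt (ξ * β n) := by
        rcases eq_or_lt_of_le hrnn with h | h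
        · rw [← h]; positivity
        · have : r ≤ 2 * Lam (β n) / lam (β n) := by
            rw [le_div_iff₀ hlampos]
            nlinarith [hkey2]
          exact le_trans this (hratio _ hβnIoc)
      have hr2 : r ^ 2 ≤ 1 / (ξ * β n) := by
        have := pow_le_pow_left₀ hrnn hrle 2
        rwa [div_pow, one_pow, Real.sq_sqrt hξβ.le] at this
      rw [hβrec]
      rw [le_div_iff₀ hξβ] at hr2
      nlinarith [hr2]
  have hgeom : ∀ t, β t = ξ ^ t * β 0 := by
    intro t
    induction t with
    | zero => simp
    | succ n ih => rw [hβrec, ih, pow_succ]; ring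
  refine ⟨inv, ?_⟩
  intro ε hε T hT hβT
  have hεpos : 0 < ε := lt_trans (by positivity) hε
  have h1 : ‖w T - wstar‖ ^ 2 ≤ 1 / β T := by
    rw [le_div_iff₀ (hβpos T)]
    have := inv T hβT
    linarith [this]
  refine le_trans h1 ?_
  have hβT' : β T = ξ ^ T * β 0 := hgeom T
  have hlogξ : 0 < Real.log ξ := Real.log_pos hξ
  have hεβ : 0 < ε * β 0 := by positivity
  have h2 : Real.log (1 / (ε * β 0)) ≤ (T : ℝ) * Real.log ξ := by
    have h3 : Real.log (1 / (ε * β 0)) / Real.log ξ ≤ (T : ℝ) - 1 := by linarith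
    rw [div_le_iff₀ hlogξ] at h3
    nlinarith [hlogξ]
  have h4 : 1 / (ε * β 0) ≤ ξ ^ T := by
    have h5 : Real.log (1 / (ε * β 0)) ≤ Real.log (ξ ^ T) := by
      rw [Real.log_pow]; exact h2
    have h6 : (0:ℝ) < 1 / (ε * β 0) := by positivity
    exact (Real.log_le_log_iff h6 (pow_pos hξ0 T)).1 h5
  rw [div_le_iff₀ hεβ] at h4
  rw [hβT', div_le_iff₀ (by positivity)]
  nlinarith [h4, pow_pos hξ0 T]
end

section
/- Let β > 0, let x₁,…,xₙ ∈ ℝ^d satisfy ‖x_i‖₂ ≤ R for all i, let y ∈ ℝⁿ, and let w¹, w² ∈ ℝ^d with ‖w¹ − w²‖₂ ≤ τ. For j ∈ {1,2} define weights s_i^j = √(β/(2π))·exp(−(β/2)(y_i − ⟨w^j, x_i⟩)²), diagonal matrices S^j = diag(s₁^j,…,sₙ^j), and let X = [x₁,…,xₙ] ∈ ℝ^{d×n}. Then |λ_min(X S¹ Xᵀ) − λ_min(X S² Xᵀ)| ≤ n·τ·β·R³/√(2πe). -/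
open Real Matrix

open scoped RealInnerProductSpace

lemma t_bound (t : ℝ) : t * Real.exp (-t^2/2) ≤ Real.exp (-(1:ℝ)/2) := by
  have h1 : t ≤ Real.exp ((t^2-1)/2) := by
    have := Real.add_one_le_exp ((t^2-1)/2)
    nlinarith [sq_nonneg (t-1)]
  calc t * Real.exp (-t^2/2) ≤ Real.exp ((t^2-1)/2) * Real.exp (-t^2/2) := by
        apply mul_le_mul_of_nonneg_right h1 (Real.exp_nonneg _)
    _ = Real.exp (-(1:ℝ)/2) := by rw [← Real.exp_add]; ring_nf

lemma sqrt2pie : Real.sqrt (2 * π * Real.exp 1) = Real.sqrt (2*π) * Real.exp (1/2) := by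
  rw [Real.sqrt_mul (by positivity)]
  congr 1
  rw [show Real.exp 1 = Real.exp (1/2) * Real.exp (1/2) by rw [← Real.exp_add]; norm_num]
  exact Real.sqrt_mul_self (Real.exp_nonneg _)

lemma lip (β : ℝ) (hβ : 0 < β) (a b : ℝ) :
    |Real.sqrt (β / (2*π)) * Real.exp (-(β/2) * a^2) -
     Real.sqrt (β / (2*π)) * Real.exp (-(β/2) * b^2)| ≤
    β / Real.sqrt (2 * π * Real.exp 1) * |a - b| := by
  have h2π : (0:ℝ) < 2*π := by positivity
  set c := Real.sqrt (β / (2*π)) with hc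
  have hcval : c = Real.sqrt β / Real.sqrt (2*π) := Real.sqrt_div hβ.le _
  set C := β / Real.sqrt (2 * π * Real.exp 1) with hC
  set f : ℝ → ℝ := fun r => c * Real.exp (-(β/2) * r^2) with hf
  set f' : ℝ → ℝ := fun r => c * (Real.exp (-(β/2) * r^2) * (-(β/2) * (2*r))) with hf'
  have hderiv : ∀ r : ℝ, HasDerivAt f (f' r) r := by
    intro r
    have h1 : HasDerivAt (fun r : ℝ => -(β/2)*r^2) (-(β/2)*(2*r)) r := by
      simpa using (hasDerivAt_pow 2 r).const_mul (-(β/2))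
    simpa [hf, hf', mul_comm] using (h1.exp).const_mul c
  have key : ∀ r : ℝ, ‖f' r‖ ≤ C := by
    intro r
    have hβr : Real.sqrt β * |r| * Real.exp (-(Real.sqrt β * |r|)^2/2) ≤ Real.exp (-(1:ℝ)/2) :=
      t_bound _
    have hsq : (Real.sqrt β * |r|)^2 = β * r^2 := by
      rw [mul_pow, Real.sq_sqrt hβ.le, sq_abs]
    rw [hsq] at hβr
    have habs : ‖f' r‖ = (Real.sqrt β / Real.sqrt (2*π)) * Real.exp (-(β/2)*r^2) * (β * |r|) := by
      rw [hf', Real.norm_eq_abs, abs_mul, abs_mul, abs_of_nonneg (Real.exp_nonneg _),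
        abs_of_nonneg (Real.sqrt_nonneg _), ← hc, hcval,
        show |-(β/2)*(2*r)| = β * |r| from by
          rw [show -(β/2)*(2*r) = -(β*r) by ring, abs_neg, abs_mul, abs_of_pos hβ]]
      ring
    rw [habs, hC, sqrt2pie]
    have hexp : Real.exp (-(β/2)*r^2) = Real.exp (-(β*r^2)/2) := by ring_nf
    rw [hexp]
    have step : (Real.sqrt β / Real.sqrt (2*π)) * Real.exp (-(β*r^2)/2) * (β * |r|)
        = (β / Real.sqrt (2*π)) * (Real.sqrt β * |r| * Real.exp (-(β*r^2)/2)) := by ring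
    rw [step]
    have h2 : (β / Real.sqrt (2*π)) * (Real.sqrt β * |r| * Real.exp (-(β*r^2)/2))
        ≤ (β / Real.sqrt (2*π)) * Real.exp (-(1:ℝ)/2) := by
      apply mul_le_mul_of_nonneg_left hβr (by positivity)
    refine h2.trans_eq ?_
    rw [show (-1:ℝ)/2 = -(1/2) by norm_num, Real.exp_neg]
    ring
  have := Convex.norm_image_sub_le_of_norm_hasDerivWithin_le
    (f := f) (f' := f') (s := Set.univ) (C := C)
    (fun x _ => (hderiv x).hasDerivWithinAt) (fun x _ => key x) convex_univ
    (Set.mem_univ b) (Set.mem_univ a)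
  simpa [hf, Real.norm_eq_abs] using this

/-- The smallest eigenvalue of a real symmetric matrix, characterized as the infimum of
Rayleigh quotients over unit vectors. -/
noncomputable def lambdaMin {d : ℕ} (A : Matrix (Fin d) (Fin d) ℝ) : ℝ :=
  ⨅ v : {v : Fin d → ℝ // ∑ i, v i ^ 2 = 1}, v.1 ⬝ᵥ A.mulVec v.1

/-- Stability of `λ_min(X S Xᵀ)` under perturbations of the model defining the Gaussian
likelihood weights `S`. -/
theorem stmt6
    {d n : ℕ} (β R τ : ℝ) (hβ : 0 < β)
    (x : Fin n → EuclideanSpace ℝ (Fin d)) (hx : ∀ i, ‖x i‖ ≤ R)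
    (y : Fin n → ℝ)
    (w₁ w₂ : EuclideanSpace ℝ (Fin d)) (hw : ‖w₁ - w₂‖ ≤ τ)
    (s : Fin 2 → Fin n → ℝ)
    (hs₁ : ∀ i, s 0 i = Real.sqrt (β / (2 * π)) *
      Real.exp (-(β / 2) * (y i - ⟪w₁, x i⟫) ^ 2))
    (hs₂ : ∀ i, s 1 i = Real.sqrt (β / (2 * π)) *
      Real.exp (-(β / 2) * (y i - ⟪w₂, x i⟫) ^ 2))
    (A : Fin 2 → Matrix (Fin d) (Fin d) ℝ)
    (hA : ∀ j a b, A j a b = ∑ i, s j i * x i a * x i b) :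
    |lambdaMin (A 0) - lambdaMin (A 1)| ≤
      n * τ * β * R ^ 3 / Real.sqrt (2 * π * Real.exp 1) := by
  have hτ : 0 ≤ τ := (norm_nonneg _).trans hw
  set B : ℝ := n * τ * β * R ^ 3 / Real.sqrt (2 * π * Real.exp 1) with hB
  set ι := {v : Fin d → ℝ // ∑ i, v i ^ 2 = 1}
  -- Rayleigh quotient formula
  have hQ : ∀ (j : Fin 2) (v : Fin d → ℝ),
      v ⬝ᵥ (A j).mulVec v = ∑ i, s j i * (∑ a, v a * x i a) ^ 2 := by
    intro j v
    simp only [dotProduct, Matrix.mulVec, hA, Finset.sum_mul, Finset.mul_sum]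
    rw [Finset.sum_comm]
    calc ∑ b : Fin d, ∑ a : Fin d, ∑ i : Fin n, v a * (s j i * x i a * x i b * v b)
        = ∑ b : Fin d, ∑ i : Fin n, ∑ a : Fin d, v a * (s j i * x i a * x i b * v b) :=
          Finset.sum_congr rfl fun y _ => Finset.sum_comm
      _ = ∑ i : Fin n, ∑ b : Fin d, ∑ a : Fin d, v a * (s j i * x i a * x i b * v b) :=
          Finset.sum_comm
      _ = ∑ i, s j i * (∑ a, v a * x i a) ^ 2 := by
          refine Finset.sum_congr rfl fun i _ => ?_
          rw [sq]
          simp only [Finset.sum_mul, Finset.mul_sum]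
          rw [Finset.sum_comm]
          refine Finset.sum_congr rfl fun a _ => Finset.sum_congr rfl fun b _ => by ring
  -- nonnegativity of weights
  have hsnn : ∀ (j : Fin 2) i, 0 ≤ s j i := by
    intro j i
    fin_cases j
    · show 0 ≤ s 0 i; rw [hs₁]; positivity
    · show 0 ≤ s 1 i; rw [hs₂]; positivity
  have hQnn : ∀ (j : Fin 2) (v : ι), 0 ≤ v.1 ⬝ᵥ (A j).mulVec v.1 := by
    intro j v
    rw [hQ]
    exact Finset.sum_nonneg fun i _ => mul_nonneg (hsnn j i) (sq_nonneg _)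
  -- per-vector bound
  have hbound : ∀ v : ι,
      |v.1 ⬝ᵥ (A 0).mulVec v.1 - v.1 ⬝ᵥ (A 1).mulVec v.1| ≤ B := by
    intro ⟨v, hv⟩
    rw [hQ, hQ, ← Finset.sum_sub_distrib]
    refine (Finset.abs_sum_le_sum_abs _ _).trans ?_
    have hterm : ∀ i : Fin n,
        |s 0 i * (∑ a, v a * x i a) ^ 2 - s 1 i * (∑ a, v a * x i a) ^ 2|
          ≤ β / Real.sqrt (2 * π * Real.exp 1) * (τ * R) * R ^ 2 := by
      intro i
      have hR : 0 ≤ R := (norm_nonneg (x i)).trans (hx i)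
      have hcs : (∑ a, v a * x i a) ^ 2 ≤ R ^ 2 := by
        have h1 := Finset.sum_mul_sq_le_sq_mul_sq Finset.univ v (fun a => x i a)
        have h2 : ∑ a, (x i a) ^ 2 = ‖x i‖ ^ 2 := by
          rw [EuclideanSpace.norm_eq, Real.sq_sqrt (by positivity)]
          simp [Real.norm_eq_abs, sq_abs]
        have h3 : ‖x i‖ ^ 2 ≤ R ^ 2 := by
          apply pow_le_pow_left₀ (norm_nonneg _) (hx i)
        calc (∑ a, v a * x i a) ^ 2 ≤ 1 * ∑ a, (x i a) ^ 2 := by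
              simpa [hv] using h1
          _ ≤ R ^ 2 := by rw [one_mul, h2]; exact h3
      have hsd : |s 0 i - s 1 i| ≤ β / Real.sqrt (2 * π * Real.exp 1) * (τ * R) := by
        rw [hs₁, hs₂]
        refine (lip β hβ _ _).trans ?_
        apply mul_le_mul_of_nonneg_left _ (by positivity)
        have : (y i - ⟪w₁, x i⟫) - (y i - ⟪w₂, x i⟫) = ⟪w₂ - w₁, x i⟫ := by
          rw [inner_sub_left]; ring
        rw [this]
        calc |⟪w₂ - w₁, x i⟫| ≤ ‖w₂ - w₁‖ * ‖x i‖ := abs_real_inner_le_norm _ _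
          _ ≤ τ * R := by
              rw [show w₂ - w₁ = -(w₁ - w₂) by abel, norm_neg]
              exact mul_le_mul hw (hx i) (norm_nonneg _) hτ
      calc |s 0 i * (∑ a, v a * x i a) ^ 2 - s 1 i * (∑ a, v a * x i a) ^ 2|
          = |s 0 i - s 1 i| * (∑ a, v a * x i a) ^ 2 := by
            rw [← sub_mul, abs_mul, abs_pow, sq_abs]
        _ ≤ β / Real.sqrt (2 * π * Real.exp 1) * (τ * R) * R ^ 2 := by
            apply mul_le_mul hsd hcs (sq_nonneg _) (by positivity)
    calc ∑ i, |s 0 i * (∑ a, v a * x i a) ^ 2 - s 1 i * (∑ a, v a * x i a) ^ 2|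
        ≤ ∑ _i : Fin n, β / Real.sqrt (2 * π * Real.exp 1) * (τ * R) * R ^ 2 :=
          Finset.sum_le_sum fun i _ => hterm i
      _ = B := by
          rw [Finset.sum_const, Finset.card_univ, Fintype.card_fin, nsmul_eq_mul, hB]
          ring
  -- infimum argument
  rcases isEmpty_or_nonempty ι with hι | hι
  · have h0 : lambdaMin (A 0) = 0 := Real.iInf_of_isEmpty _
    have h1 : lambdaMin (A 1) = 0 := Real.iInf_of_isEmpty _
    rw [h0, h1, sub_zero, abs_zero, hB]
    rcases Nat.eq_zero_or_pos n with hn | hn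
    · simp [hn]
    · have hR : 0 ≤ R := (norm_nonneg (x ⟨0, hn⟩)).trans (hx ⟨0, hn⟩)
      positivity
  · have hbdd : ∀ j : Fin 2, BddBelow (Set.range fun v : ι => v.1 ⬝ᵥ (A j).mulVec v.1) := by
      intro j
      exact ⟨0, by rintro _ ⟨v, rfl⟩; exact hQnn j v⟩
    have hrfl0 : lambdaMin (A 0) = ⨅ v : ι, v.1 ⬝ᵥ (A 0).mulVec v.1 := rfl
    have hrfl1 : lambdaMin (A 1) = ⨅ v : ι, v.1 ⬝ᵥ (A 1).mulVec v.1 := rfl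
    have h01 : lambdaMin (A 0) - B ≤ lambdaMin (A 1) := by
      rw [hrfl1]
      apply le_ciInf; intro v
      have h := (abs_sub_le_iff.mp (hbound v)).1
      have h2 : lambdaMin (A 0) ≤ v.1 ⬝ᵥ (A 0).mulVec v.1 := by
        rw [hrfl0]; exact ciInf_le (hbdd 0) v
      linarith
    have h10 : lambdaMin (A 1) - B ≤ lambdaMin (A 0) := by
      rw [hrfl0]
      apply le_ciInf; intro v
      have h := (abs_sub_le_iff.mp (hbound v)).2
      have h2 : lambdaMin (A 1) ≤ v.1 ⬝ᵥ (A 1).mulVec v.1 := by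
        rw [hrfl1]; exact ciInf_le (hbdd 1) v
      linarith
    rw [abs_sub_le_iff]
    constructor <;> linarith
end

section
/- Let d ≥ 1, β > 0, let x ∼ N(0, I_d) be a standard Gaussian vector in ℝ^d, let Δ ∈ ℝ^d with Δ ≠ 0, and let v ∈ ℝ^d with ‖v‖₂ = 1. Writing a = ⟨Δ, v⟩/‖Δ‖₂, one has E[ ⟨x, v⟩² · exp(−(β/2)·⟨Δ, x⟩²) ] = a²/(1 + β‖Δ‖₂²)^{3/2} + (1 − a²)/(1 + β‖Δ‖₂²)^{1/2}. In particular, the infimum of this expectation over unit vectors v equals 1/(1 + β‖Δ‖₂²)^{3/2}. -/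
open Real MeasureTheory Set Filter
open scoped RealInnerProductSpace Topology

lemma odd_gauss (b : ℝ) : ∫ x : ℝ, x * Real.exp (-b * x ^ 2) = 0 := by
  have hf : Continuous fun x : ℝ => x * Real.exp (-b * x ^ 2) := by continuity
  have h : ∫ x : ℝ, x * Real.exp (-b * x ^ 2)
      = ∫ x : ℝ, (-x) * Real.exp (-b * (-x) ^ 2) := by
    conv_lhs => rw [← Measure.map_neg_eq_self (volume : Measure ℝ)]
    rw [integral_map measurable_neg.aemeasurable hf.aestronglyMeasurable]
  simp only [neg_sq, neg_mul] at h
  rw [integral_neg] at h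
  have h2 : (∫ x : ℝ, x * Real.exp (-b * x ^ 2))
      = -∫ x : ℝ, x * Real.exp (-b * x ^ 2) := by
    simpa [neg_mul] using h
  linarith

lemma int_exp_gauss {b : ℝ} (hb : 0 < b) : Integrable fun x : ℝ => Real.exp (-b * x ^ 2) :=
  integrable_exp_neg_mul_sq hb

lemma int_sq_gauss {b : ℝ} (hb : 0 < b) :
    Integrable fun x : ℝ => x ^ 2 * Real.exp (-b * x ^ 2) := by
  have := integrable_rpow_mul_exp_neg_mul_sq hb (s := ((2 : ℕ) : ℝ)) (by norm_num)
  simpa [Real.rpow_natCast] using this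

lemma int_lin_gauss {b : ℝ} (hb : 0 < b) :
    Integrable fun x : ℝ => x * Real.exp (-b * x ^ 2) :=
  integrable_mul_exp_neg_mul_sq hb

section
variable {b : ℝ}

lemma sq_gauss_eval {b : ℝ} (hb : 0 < b) :
    ∫ x : ℝ, x ^ 2 * Real.exp (-b * x ^ 2) = Real.sqrt (π / b) / (2 * b) := by
  have hint2 : Integrable fun x : ℝ => x ^ 2 * Real.exp (-b * x ^ 2) := by
    have := integrable_rpow_mul_exp_neg_mul_sq hb (s := ((2 : ℕ) : ℝ)) (by norm_num)
    simpa [Real.rpow_natCast] using this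
  have hint0 : Integrable fun x : ℝ => Real.exp (-b * x ^ 2) := integrable_exp_neg_mul_sq hb
  -- derivative computation
  have hderiv : ∀ x : ℝ, HasDerivAt (fun x : ℝ => -x * Real.exp (-b * x ^ 2) / (2 * b))
      (x ^ 2 * Real.exp (-b * x ^ 2) - Real.exp (-b * x ^ 2) / (2 * b)) x := by
    intro x
    have h1 : HasDerivAt (fun x : ℝ => -b * x ^ 2) (-b * (2 * x)) x := by
      simpa using ((hasDerivAt_pow 2 x).const_mul (-b))
    have h2 : HasDerivAt (fun x : ℝ => Real.exp (-b * x ^ 2))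
        (Real.exp (-b * x ^ 2) * (-b * (2 * x))) x := h1.exp
    have h3 : HasDerivAt (fun x : ℝ => -x * Real.exp (-b * x ^ 2) / (2 * b))
        ((-1 * Real.exp (-b * x ^ 2) + (-x) * (Real.exp (-b * x ^ 2) * (-b * (2 * x)))) / (2 * b)) x := by
      exact ((hasDerivAt_neg x).mul h2).div_const (2 * b)
    convert h3 using 1
    field_simp
    ring
  -- tendsto 0 at top
  have htend : Tendsto (fun x : ℝ => -x * Real.exp (-b * x ^ 2) / (2 * b)) atTop (𝓝 0) := by
    have h1 : Tendsto (fun x : ℝ => x * Real.exp (-b * x ^ 2)) atTop (𝓝 0) := by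
      have ho : (fun x : ℝ => x * Real.exp (-b * x ^ 2)) =o[atTop]
          fun x : ℝ => Real.exp (-(1/2) * x) := by
        simpa [Real.rpow_one] using rpow_mul_exp_neg_mul_sq_isLittleO_exp_neg hb 1
      have hg : Tendsto (fun x : ℝ => Real.exp (-(1/2) * x)) atTop (𝓝 0) := by
        apply Real.tendsto_exp_atBot.comp
        exact (tendsto_const_mul_atBot_of_neg (by norm_num)).mpr tendsto_id
      exact ho.isBigO.trans_tendsto hg
    have := (h1.neg).div_const (2 * b)
    simpa [neg_mul] using this
  have hIoi : ∫ x in Ioi (0:ℝ),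
      (x ^ 2 * Real.exp (-b * x ^ 2) - Real.exp (-b * x ^ 2) / (2 * b)) = 0 := by
    have := integral_Ioi_of_hasDerivAt_of_tendsto' (a := 0)
      (f := fun x : ℝ => -x * Real.exp (-b * x ^ 2) / (2 * b))
      (f' := fun x : ℝ => x ^ 2 * Real.exp (-b * x ^ 2) - Real.exp (-b * x ^ 2) / (2 * b))
      (fun x _ => hderiv x)
      ((hint2.sub (hint0.div_const (2 * b))).integrableOn) htend
    simpa using this
  have hsplit : ∫ x in Ioi (0:ℝ), x ^ 2 * Real.exp (-b * x ^ 2)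
      = ∫ x in Ioi (0:ℝ), Real.exp (-b * x ^ 2) / (2 * b) := by
    have := integral_sub (hint2.integrableOn (s := Ioi 0))
      ((hint0.div_const (2 * b)).integrableOn (s := Ioi 0))
    rw [hIoi] at this
    linarith [this]
  -- even function identities
  have heven2 : ∫ x : ℝ, x ^ 2 * Real.exp (-b * x ^ 2)
      = 2 * ∫ x in Ioi (0:ℝ), x ^ 2 * Real.exp (-b * x ^ 2) := by
    rw [← integral_comp_abs (f := fun x => x ^ 2 * Real.exp (-b * x ^ 2))]
    simp [sq_abs]
  have heven0 : ∫ x : ℝ, Real.exp (-b * x ^ 2)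
      = 2 * ∫ x in Ioi (0:ℝ), Real.exp (-b * x ^ 2) := by
    rw [← integral_comp_abs (f := fun x => Real.exp (-b * x ^ 2))]
    simp [sq_abs]
  have hgauss : ∫ x : ℝ, Real.exp (-b * x ^ 2) = Real.sqrt (π / b) := integral_gaussian b
  rw [hgauss] at heven0
  have hI : ∫ x in Ioi (0:ℝ), Real.exp (-b * x ^ 2) = Real.sqrt (π / b) / 2 := by
    linarith [heven0]
  rw [heven2, hsplit, integral_div, hI]
  ring
end



lemma gauss_eval' {c : ℝ} (hc : 0 < c) :
    ∫ x : ℝ, Real.exp (-(c / 2) * x ^ 2) = Real.sqrt (2 * π / c) := by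
  rw [integral_gaussian]
  congr 1
  rw [eq_div_iff (by positivity : c ≠ 0)]
  field_simp

lemma sq_gauss_eval' {c : ℝ} (hc : 0 < c) :
    ∫ x : ℝ, x ^ 2 * Real.exp (-(c / 2) * x ^ 2) = Real.sqrt (2 * π / c) / c := by
  rw [sq_gauss_eval (by positivity)]
  rw [show π / (c / 2) = 2 * π / c by rw [eq_div_iff (by positivity : c ≠ 0)]; field_simp]
  rw [show 2 * (c / 2) = c by ring]

lemma pi_integral {d : ℕ} (κ : Fin d → ℝ) (hκ : ∀ i, 0 < κ i) (w : Fin d → ℝ) :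
    ∫ y : Fin d → ℝ, ((∑ i, w i * y i) ^ 2 * ∏ i, Real.exp (-(κ i / 2) * y i ^ 2))
      = (∑ i, w i ^ 2 / κ i) * ∏ i, Real.sqrt (2 * π / κ i) := by
  classical
  set H : Fin d → Fin d → Fin d → ℝ → ℝ := fun i j k t =>
    (if i = k then t else 1) * (if j = k then t else 1) * Real.exp (-(κ k / 2) * t ^ 2)
    with hH
  have hHint : ∀ i j k, Integrable (H i j k) := by
    intro i j k
    have hk : 0 < κ k / 2 := by have := hκ k; positivity
    by_cases h1 : i = k
    · by_cases h2 : j = k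
      · rw [show H i j k = fun t : ℝ => t ^ 2 * Real.exp (-(κ k / 2) * t ^ 2) from
          funext fun t => by simp [hH, h1, h2, pow_two]]
        exact int_sq_gauss hk
      · rw [show H i j k = fun t : ℝ => t * Real.exp (-(κ k / 2) * t ^ 2) from
          funext fun t => by simp [hH, h1, h2]]
        exact integrable_mul_exp_neg_mul_sq hk
    · by_cases h2 : j = k
      · rw [show H i j k = fun t : ℝ => t * Real.exp (-(κ k / 2) * t ^ 2) from
          funext fun t => by simp [hH, h1, h2]]
        exact integrable_mul_exp_neg_mul_sq hk
      · rw [show H i j k = fun t : ℝ => Real.exp (-(κ k / 2) * t ^ 2) from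
          funext fun t => by simp [hH, h1, h2]]
        exact integrable_exp_neg_mul_sq hk
  have hprod : ∀ i j (y : Fin d → ℝ),
      (∏ k, H i j k (y k)) = y i * y j * ∏ k, Real.exp (-(κ k / 2) * (y k) ^ 2) := by
    intro i j y
    simp only [hH]
    rw [Finset.prod_mul_distrib, Finset.prod_mul_distrib, Finset.prod_ite_eq,
      Finset.prod_ite_eq]
    simp
  have hpoint : ∀ y : Fin d → ℝ,
      (∑ i, w i * y i) ^ 2 * ∏ k, Real.exp (-(κ k / 2) * (y k) ^ 2)
        = ∑ i, ∑ j, (w i * w j) * ∏ k, H i j k (y k) := by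
    intro y
    simp_rw [hprod]
    rw [pow_two, Finset.sum_mul_sum, Finset.sum_mul]
    refine Finset.sum_congr rfl fun i _ => ?_
    rw [Finset.sum_mul]
    refine Finset.sum_congr rfl fun j _ => ?_
    ring
  simp only [hpoint]
  rw [integral_finset_sum (μ := (volume : Measure (Fin d → ℝ))) _ (fun i _ =>
    integrable_finset_sum _ (fun j _ => (Integrable.fintype_prod (fun k => hHint i j k)).const_mul _))]
  have hswap : ∀ i, ∫ y : Fin d → ℝ, ∑ j, (w i * w j) * ∏ k, H i j k (y k)
      = ∑ j, (w i * w j) * ∏ k, ∫ t, H i j k t := by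
    intro i
    rw [integral_finset_sum (μ := (volume : Measure (Fin d → ℝ))) _ (fun j _ =>
      (Integrable.fintype_prod (fun k => hHint i j k)).const_mul _)]
    refine Finset.sum_congr rfl fun j _ => ?_
    rw [integral_const_mul, integral_fintype_prod_volume_eq_prod (f := fun k => H i j k)]
  simp_rw [hswap]
  -- off-diagonal terms vanish
  have hoff : ∀ i j, i ≠ j → (∏ k, ∫ t, H i j k t) = 0 := by
    intro i j hij
    apply Finset.prod_eq_zero (Finset.mem_univ i)
    rw [show H i j i = fun t : ℝ => t * Real.exp (-(κ i / 2) * t ^ 2) from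
      funext fun t => by simp [hH, Ne.symm hij]]
    rw [odd_gauss]
  -- diagonal terms
  have hdiag : ∀ i, (∏ k, ∫ t, H i i k t)
      = (∏ k, Real.sqrt (2 * π / κ k)) / κ i := by
    intro i
    have heq : ∀ k, (∫ t, H i i k t)
        = if i = k then Real.sqrt (2 * π / κ k) / κ k else Real.sqrt (2 * π / κ k) := by
      intro k
      by_cases h : i = k
      · rw [show H i i k = fun t : ℝ => t ^ 2 * Real.exp (-(κ k / 2) * t ^ 2) from
          funext fun t => by simp [hH, h, pow_two]]
        rw [sq_gauss_eval' (hκ k), if_pos h]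
      · rw [show H i i k = fun t : ℝ => Real.exp (-(κ k / 2) * t ^ 2) from
          funext fun t => by simp [hH, h]]
        rw [gauss_eval' (hκ k), if_neg h]
    rw [Finset.prod_congr rfl (fun k _ => heq k)]
    rw [← Finset.mul_prod_erase _ _ (Finset.mem_univ i), if_pos rfl]
    rw [← Finset.mul_prod_erase _ (fun k => Real.sqrt (2 * π / κ k)) (Finset.mem_univ i)]
    rw [Finset.prod_congr rfl (fun k hk => by
      rw [if_neg (fun h => (Finset.mem_erase.mp hk).1 h.symm)])]
    have : κ i ≠ 0 := (hκ i).ne'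
    field_simp
  calc ∑ i, ∑ j, (w i * w j) * ∏ k, ∫ t, H i j k t
      = ∑ i, (w i * w i) * ((∏ k, Real.sqrt (2 * π / κ k)) / κ i) := by
        refine Finset.sum_congr rfl fun i _ => ?_
        rw [Finset.sum_eq_single i (fun j _ hj => by rw [hoff i j (fun h => hj h.symm), mul_zero])
          (fun h => absurd (Finset.mem_univ i) h)]
        rw [hdiag i]
    _ = (∑ i, w i ^ 2 / κ i) * ∏ i, Real.sqrt (2 * π / κ i) := by
        rw [Finset.sum_mul]
        refine Finset.sum_congr rfl fun i _ => ?_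
        rw [pow_two]
        have : κ i ≠ 0 := (hκ i).ne'
        field_simp

lemma key_integral {d : ℕ} (hd : 0 < d) {γ : ℝ} (hγ : 0 < γ)
    (u v : EuclideanSpace ℝ (Fin d)) (hu : ‖u‖ = 1) (hv : ‖v‖ = 1) :
    (2 * π) ^ (-(d : ℝ) / 2) *
      ∫ x : EuclideanSpace ℝ (Fin d),
        ⟪x, v⟫ ^ 2 * Real.exp (-(γ / 2) * ⟪u, x⟫ ^ 2) * Real.exp (-‖x‖ ^ 2 / 2)
    = ⟪u, v⟫ ^ 2 / (1 + γ) ^ ((3:ℝ)/2) + (1 - ⟪u, v⟫ ^ 2) / (1 + γ) ^ ((1:ℝ)/2) := by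
  classical
  haveI : NeZero d := ⟨hd.ne'⟩
  have hcard : Module.finrank ℝ (EuclideanSpace ℝ (Fin d)) = Fintype.card (Fin d) := by
    simp [finrank_euclideanSpace]
  have horth : Orthonormal ℝ (({0} : Set (Fin d)).restrict (fun _ => u)) := by
    constructor
    · intro i; exact hu
    · intro i j hij
      exact absurd (Subtype.ext ((Set.mem_singleton_iff.mp i.2).trans
        (Set.mem_singleton_iff.mp j.2).symm)) hij
  obtain ⟨b, hbu⟩ := horth.exists_orthonormalBasis_extension_of_card_eq hcard
  have hb0 : b 0 = u := hbu 0 (Set.mem_singleton 0)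
  set w : Fin d → ℝ := fun i => b.repr v i with hw
  have hw0 : w 0 = ⟪u, v⟫ := by
    show b.repr v 0 = _
    rw [b.repr_apply_apply, hb0]
  have hw2 : ∑ i, w i ^ 2 = 1 := by
    have h1 : ‖b.repr v‖ = 1 := by rw [b.repr.norm_map, hv]
    have h2 : ‖b.repr v‖ ^ 2 = ∑ i, w i ^ 2 := by
      rw [EuclideanSpace.norm_eq, Real.sq_sqrt (by positivity)]
      exact Finset.sum_congr rfl fun i _ => by rw [Real.norm_eq_abs, sq_abs]
    rw [h1] at h2; rw [← h2]; norm_num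
  set κ : Fin d → ℝ := fun i => if i = 0 then 1 + γ else 1 with hκdef
  have hκpos : ∀ i, 0 < κ i := by
    intro i; by_cases h : i = 0 <;> simp [hκdef, h] <;> linarith
  have hcpos : (0:ℝ) < 1 + γ := by linarith
  -- Step A: change variables by the orthonormal basis
  have stepA : ∫ x : EuclideanSpace ℝ (Fin d),
        ⟪x, v⟫ ^ 2 * Real.exp (-(γ / 2) * ⟪u, x⟫ ^ 2) * Real.exp (-‖x‖ ^ 2 / 2)
      = ∫ y : EuclideanSpace ℝ (Fin d),
        ⟪y, b.repr v⟫ ^ 2 * Real.exp (-(γ / 2) * (y 0) ^ 2) * Real.exp (-‖y‖ ^ 2 / 2) := by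
    rw [← (b.measurePreserving_repr_symm).integral_comp
      b.repr.symm.toHomeomorph.measurableEmbedding
      (fun x => ⟪x, v⟫ ^ 2 * Real.exp (-(γ / 2) * ⟪u, x⟫ ^ 2) * Real.exp (-‖x‖ ^ 2 / 2))]
    refine congrArg _ (funext fun y => ?_)
    have h1 : ⟪b.repr.symm y, v⟫ = ⟪y, b.repr v⟫ := by
      rw [← b.repr.inner_map_map (b.repr.symm y) v, b.repr.apply_symm_apply]
    have h2 : ⟪u, b.repr.symm y⟫ = y 0 := by
      rw [← b.repr.inner_map_map u (b.repr.symm y), b.repr.apply_symm_apply, ← hb0,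
        b.repr_self, EuclideanSpace.inner_single_left]
      simp
    have h3 : ‖b.repr.symm y‖ = ‖y‖ := b.repr.symm.norm_map y
    rw [h1, h2, h3]
  -- Step B: push to the product measure
  have stepB : ∫ y : EuclideanSpace ℝ (Fin d),
        ⟪y, b.repr v⟫ ^ 2 * Real.exp (-(γ / 2) * (y 0) ^ 2) * Real.exp (-‖y‖ ^ 2 / 2)
      = ∫ z : Fin d → ℝ, ((∑ i, w i * z i) ^ 2 * ∏ i, Real.exp (-(κ i / 2) * z i ^ 2)) := by
    rw [← ((EuclideanSpace.volume_preserving_symm_measurableEquiv_toLp (Fin d)).symm).integral_comp'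
      (fun y => ⟪y, b.repr v⟫ ^ 2 * Real.exp (-(γ / 2) * (y 0) ^ 2) * Real.exp (-‖y‖ ^ 2 / 2))]
    refine congrArg _ (funext fun z => ?_)
    have hz : ∀ i, ((MeasurableEquiv.toLp 2 (Fin d → ℝ)).symm.symm z : EuclideanSpace ℝ (Fin d)) i
        = z i := fun i => rfl
    have hinner : ⟪((MeasurableEquiv.toLp 2 (Fin d → ℝ)).symm.symm z : EuclideanSpace ℝ (Fin d)),
        b.repr v⟫ = ∑ i, w i * z i := by
      rw [PiLp.inner_apply]
      exact Finset.sum_congr rfl fun i _ => by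
        rw [hz i]; simp [hw]
    have hnorm : ‖((MeasurableEquiv.toLp 2 (Fin d → ℝ)).symm.symm z :
        EuclideanSpace ℝ (Fin d))‖ ^ 2 = ∑ i, z i ^ 2 := by
      rw [EuclideanSpace.norm_eq, Real.sq_sqrt (by positivity)]
      exact Finset.sum_congr rfl fun i _ => by rw [hz i, Real.norm_eq_abs, sq_abs]
    rw [hinner, hnorm, hz 0]
    -- combine the exponentials
    rw [← Real.exp_sum]
    have : ∑ i, -(κ i / 2) * z i ^ 2
        = ∑ i, (-(1/2) * z i ^ 2 + if i = 0 then -(γ/2) * z i ^ 2 else 0) := by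
      refine Finset.sum_congr rfl fun i _ => ?_
      by_cases h : i = 0 <;> simp [hκdef, h] <;> ring
    rw [this, Finset.sum_add_distrib, Finset.sum_ite_eq' Finset.univ 0
      (fun i => -(γ/2) * z i ^ 2)]
    simp only [Finset.mem_univ, if_true]
    rw [mul_assoc, ← Real.exp_add]
    congr 1
    have hhalf : (∑ i, -(1/2) * z i ^ 2 : ℝ) = (-∑ i, z i ^ 2) / 2 := by
      have e1 : ∀ i : Fin d, -(1/2) * z i ^ 2 = -(z i ^ 2 / 2) := fun i => by ring
      rw [Finset.sum_congr rfl fun i _ => e1 i, Finset.sum_neg_distrib, ← Finset.sum_div,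
        neg_div]
    rw [hhalf]
    ring
  rw [stepA, stepB, pi_integral κ hκpos w]
  -- evaluate the sum
  have hsum : ∑ i, w i ^ 2 / κ i = ⟪u, v⟫ ^ 2 / (1 + γ) + (1 - ⟪u, v⟫ ^ 2) := by
    have hterm : ∀ i, w i ^ 2 / κ i
        = w i ^ 2 + (if i = 0 then ⟪u, v⟫ ^ 2 / (1 + γ) - ⟪u, v⟫ ^ 2 else 0) := by
      intro i
      by_cases h : i = 0
      · subst h
        rw [show κ 0 = 1 + γ from by simp [hκdef], hw0, if_pos rfl]
        ring
      · simp [hκdef, h]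
    rw [Finset.sum_congr rfl (fun i _ => hterm i), Finset.sum_add_distrib,
      Finset.sum_ite_eq' Finset.univ 0 (fun _ => ⟪u, v⟫ ^ 2 / (1 + γ) - ⟪u, v⟫ ^ 2), hw2]
    simp only [Finset.mem_univ, if_true]
    ring
  -- evaluate the product
  have hprodA : ∏ i, Real.sqrt (2 * π / κ i)
      = Real.sqrt (2 * π) ^ d / Real.sqrt (1 + γ) := by
    have hterm : ∀ i : Fin d, Real.sqrt (2 * π / κ i)
        = Real.sqrt (2 * π) * (if i = 0 then (Real.sqrt (1 + γ))⁻¹ else 1) := by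
      intro i
      by_cases h : i = 0
      · subst h
        rw [show κ 0 = 1 + γ from by simp [hκdef], if_pos rfl,
          Real.sqrt_div (by positivity), div_eq_mul_inv]
      · simp [hκdef, h]
    rw [Finset.prod_congr rfl (fun i _ => hterm i), Finset.prod_mul_distrib,
      Finset.prod_const, Finset.prod_ite_eq' Finset.univ 0 (fun _ => (Real.sqrt (1 + γ))⁻¹)]
    simp only [Finset.mem_univ, if_true, Finset.card_univ, Fintype.card_fin]
    rw [div_eq_mul_inv]
  rw [hsum, hprodA]
  -- final algebra
  have hpow : (2 * π) ^ (-(d : ℝ) / 2) * Real.sqrt (2 * π) ^ d = 1 := by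
    have h2π : (0:ℝ) < 2 * π := by positivity
    rw [Real.sqrt_eq_rpow, ← Real.rpow_natCast ((2 * π) ^ ((1:ℝ)/2)) d,
      ← Real.rpow_mul h2π.le, ← Real.rpow_add h2π]
    rw [show -(d : ℝ) / 2 + 1 / 2 * (d : ℕ) = 0 by push_cast; ring, Real.rpow_zero]
  have hs : Real.sqrt (1 + γ) ≠ 0 := by positivity
  have hc32 : (1 + γ) ^ ((3:ℝ)/2) = (1 + γ) * Real.sqrt (1 + γ) := by
    rw [show (3:ℝ)/2 = 1 + 1/2 by norm_num, Real.rpow_add hcpos, Real.rpow_one,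
      Real.sqrt_eq_rpow]
  have hc12 : (1 + γ) ^ ((1:ℝ)/2) = Real.sqrt (1 + γ) := by
    rw [Real.sqrt_eq_rpow]
  rw [hc32, hc12]
  calc (2 * π) ^ (-(d : ℝ) / 2) * ((⟪u, v⟫ ^ 2 / (1 + γ) + (1 - ⟪u, v⟫ ^ 2))
        * (Real.sqrt (2 * π) ^ d / Real.sqrt (1 + γ)))
      = ((2 * π) ^ (-(d : ℝ) / 2) * Real.sqrt (2 * π) ^ d)
        * ((⟪u, v⟫ ^ 2 / (1 + γ) + (1 - ⟪u, v⟫ ^ 2)) / Real.sqrt (1 + γ)) := by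
        ring
    _ = (⟪u, v⟫ ^ 2 / (1 + γ) + (1 - ⟪u, v⟫ ^ 2)) / Real.sqrt (1 + γ) := by
        rw [hpow, one_mul]
    _ = ⟪u, v⟫ ^ 2 / ((1 + γ) * Real.sqrt (1 + γ))
        + (1 - ⟪u, v⟫ ^ 2) / Real.sqrt (1 + γ) := by
        field_simp

/-- Gaussian expectation identity for the LWSC constant of robust least squares regression
(noiseless case): for `x ∼ N(0, I_d)`, a nonzero `Δ` and a unit vector `v` with
`a = ⟨Δ,v⟩/‖Δ‖`, `E[⟨x,v⟩²·exp(−(β/2)⟨Δ,x⟩²)] = a²/(1+β‖Δ‖²)^{3/2} + (1−a²)/(1+β‖Δ‖²)^{1/2}`,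
and the infimum of this expectation over unit vectors equals `1/(1+β‖Δ‖²)^{3/2}`. -/
theorem stmt7
    {d : ℕ} (hd : 1 ≤ d) (β : ℝ) (hβ : 0 < β)
    (Δ : EuclideanSpace ℝ (Fin d)) (hΔ : Δ ≠ 0) :
    (∀ v : EuclideanSpace ℝ (Fin d), ‖v‖ = 1 →
      (2 * π) ^ (-(d : ℝ) / 2) *
        ∫ x : EuclideanSpace ℝ (Fin d),
          ⟪x, v⟫ ^ 2 * Real.exp (-(β / 2) * ⟪Δ, x⟫ ^ 2) * Real.exp (-‖x‖ ^ 2 / 2)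
      = (⟪Δ, v⟫ / ‖Δ‖) ^ 2 / (1 + β * ‖Δ‖ ^ 2) ^ ((3 : ℝ) / 2)
        + (1 - (⟪Δ, v⟫ / ‖Δ‖) ^ 2) / (1 + β * ‖Δ‖ ^ 2) ^ ((1 : ℝ) / 2)) ∧
    (⨅ v : {v : EuclideanSpace ℝ (Fin d) // ‖v‖ = 1},
      (2 * π) ^ (-(d : ℝ) / 2) *
        ∫ x : EuclideanSpace ℝ (Fin d),
          ⟪x, (v : EuclideanSpace ℝ (Fin d))⟫ ^ 2 *
            Real.exp (-(β / 2) * ⟪Δ, x⟫ ^ 2) * Real.exp (-‖x‖ ^ 2 / 2))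
      = 1 / (1 + β * ‖Δ‖ ^ 2) ^ ((3 : ℝ) / 2) := by
  have hd0 : 0 < d := hd
  have hr : (0:ℝ) < ‖Δ‖ := norm_pos_iff.mpr hΔ
  set u : EuclideanSpace ℝ (Fin d) := ‖Δ‖⁻¹ • Δ with hudef
  have hu : ‖u‖ = 1 := norm_smul_inv_norm hΔ
  set γ : ℝ := β * ‖Δ‖ ^ 2 with hγdef
  have hγ : 0 < γ := by positivity
  have ha : ∀ y : EuclideanSpace ℝ (Fin d), ⟪u, y⟫ = ⟪Δ, y⟫ / ‖Δ‖ := by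
    intro y
    rw [hudef, real_inner_smul_left]
    rw [div_eq_inv_mul]
  have hexp : ∀ x : EuclideanSpace ℝ (Fin d),
      -(β / 2) * ⟪Δ, x⟫ ^ 2 = -(γ / 2) * ⟪u, x⟫ ^ 2 := by
    intro x
    rw [ha x, hγdef]
    field_simp
  have part1 : ∀ v : EuclideanSpace ℝ (Fin d), ‖v‖ = 1 →
      (2 * π) ^ (-(d : ℝ) / 2) *
        ∫ x : EuclideanSpace ℝ (Fin d),
          ⟪x, v⟫ ^ 2 * Real.exp (-(β / 2) * ⟪Δ, x⟫ ^ 2) * Real.exp (-‖x‖ ^ 2 / 2)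
      = (⟪Δ, v⟫ / ‖Δ‖) ^ 2 / (1 + β * ‖Δ‖ ^ 2) ^ ((3 : ℝ) / 2)
        + (1 - (⟪Δ, v⟫ / ‖Δ‖) ^ 2) / (1 + β * ‖Δ‖ ^ 2) ^ ((1 : ℝ) / 2) := by
    intro v hv
    have hkey := key_integral hd0 hγ u v hu hv
    rw [← ha v, ← hγdef]
    rw [← hkey]
    congr 1
    refine congrArg _ (funext fun x => ?_)
    rw [hexp x]
  refine ⟨part1, ?_⟩
  -- the infimum
  have hc0 : (0:ℝ) < 1 + β * ‖Δ‖ ^ 2 := by positivity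
  have hc1 : (1:ℝ) ≤ 1 + β * ‖Δ‖ ^ 2 := by nlinarith
  have h32pos : (0:ℝ) < (1 + β * ‖Δ‖ ^ 2) ^ ((3:ℝ)/2) := Real.rpow_pos_of_pos hc0 _
  have h12pos : (0:ℝ) < (1 + β * ‖Δ‖ ^ 2) ^ ((1:ℝ)/2) := Real.rpow_pos_of_pos hc0 _
  have hle : (1 + β * ‖Δ‖ ^ 2) ^ ((1:ℝ)/2) ≤ (1 + β * ‖Δ‖ ^ 2) ^ ((3:ℝ)/2) :=
    Real.rpow_le_rpow_of_exponent_le hc1 (by norm_num)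
  have ha2 : ∀ v : EuclideanSpace ℝ (Fin d), ‖v‖ = 1 → (⟪Δ, v⟫ / ‖Δ‖) ^ 2 ≤ 1 := by
    intro v hv
    have h1 : |⟪Δ, v⟫| ≤ ‖Δ‖ := by
      have := abs_real_inner_le_norm Δ v
      rwa [hv, mul_one] at this
    have h2 : (⟪Δ, v⟫ / ‖Δ‖) ^ 2 = (|⟪Δ, v⟫| / ‖Δ‖) ^ 2 := by
      rw [div_pow, div_pow, sq_abs]
    rw [h2]
    have h3 : |⟪Δ, v⟫| / ‖Δ‖ ≤ 1 := (div_le_one hr).mpr h1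
    have h4 : 0 ≤ |⟪Δ, v⟫| / ‖Δ‖ := by positivity
    nlinarith
  have bound : ∀ vv : {v : EuclideanSpace ℝ (Fin d) // ‖v‖ = 1},
      1 / (1 + β * ‖Δ‖ ^ 2) ^ ((3:ℝ)/2) ≤
      (2 * π) ^ (-(d : ℝ) / 2) *
        ∫ x : EuclideanSpace ℝ (Fin d),
          ⟪x, (vv : EuclideanSpace ℝ (Fin d))⟫ ^ 2 *
            Real.exp (-(β / 2) * ⟪Δ, x⟫ ^ 2) * Real.exp (-‖x‖ ^ 2 / 2) := by
    rintro ⟨v, hv⟩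
    rw [part1 v hv]
    have h2 := ha2 v hv
    calc 1 / (1 + β * ‖Δ‖ ^ 2) ^ ((3:ℝ)/2)
        = (⟪Δ, v⟫ / ‖Δ‖) ^ 2 / (1 + β * ‖Δ‖ ^ 2) ^ ((3:ℝ)/2)
          + (1 - (⟪Δ, v⟫ / ‖Δ‖) ^ 2) / (1 + β * ‖Δ‖ ^ 2) ^ ((3:ℝ)/2) := by ring
      _ ≤ (⟪Δ, v⟫ / ‖Δ‖) ^ 2 / (1 + β * ‖Δ‖ ^ 2) ^ ((3:ℝ)/2)
          + (1 - (⟪Δ, v⟫ / ‖Δ‖) ^ 2) / (1 + β * ‖Δ‖ ^ 2) ^ ((1:ℝ)/2) := by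
          have hnum : 0 ≤ 1 - (⟪Δ, v⟫ / ‖Δ‖) ^ 2 := by linarith
          gcongr
  have hval : (2 * π) ^ (-(d : ℝ) / 2) *
      ∫ x : EuclideanSpace ℝ (Fin d),
        ⟪x, u⟫ ^ 2 * Real.exp (-(β / 2) * ⟪Δ, x⟫ ^ 2) * Real.exp (-‖x‖ ^ 2 / 2)
      = 1 / (1 + β * ‖Δ‖ ^ 2) ^ ((3:ℝ)/2) := by
    rw [part1 u hu]
    have hau : ⟪Δ, u⟫ / ‖Δ‖ = 1 := by
      rw [hudef, real_inner_smul_right, real_inner_self_eq_norm_sq]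
      field_simp
    rw [hau]
    norm_num
  haveI : Nonempty {v : EuclideanSpace ℝ (Fin d) // ‖v‖ = 1} := ⟨⟨u, hu⟩⟩
  apply le_antisymm
  · have hbdd : BddBelow (Set.range fun vv : {v : EuclideanSpace ℝ (Fin d) // ‖v‖ = 1} =>
        (2 * π) ^ (-(d : ℝ) / 2) *
        ∫ x : EuclideanSpace ℝ (Fin d),
          ⟪x, (vv : EuclideanSpace ℝ (Fin d))⟫ ^ 2 *
            Real.exp (-(β / 2) * ⟪Δ, x⟫ ^ 2) * Real.exp (-‖x‖ ^ 2 / 2)) := by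
      refine ⟨1 / (1 + β * ‖Δ‖ ^ 2) ^ ((3:ℝ)/2), ?_⟩
      rintro y ⟨vv, rfl⟩
      exact bound vv
    exact le_of_le_of_eq (ciInf_le hbdd ⟨u, hu⟩) hval
  · exact le_ciInf bound
end

section
/- Let β > 0, Δ ∈ ℝ^d, let x₁,…,x_B ∈ ℝ^d, b ∈ ℝ^B, and define s_i = √(β/(2π))·exp(−(β/2)(b_i − ⟨Δ, x_i⟩)²) for i = 1,…,B. Let X_B = [x₁,…,x_B] ∈ ℝ^{d×B}. Then Σ_{i=1}^B (s_i·b_i)² ≤ [ (β‖Δ‖₂²·λ_max(X_B X_Bᵀ)/(2π))^{1/3} + (B/(2πe))^{1/3} ]³. -/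
open Real Matrix

open scoped RealInnerProductSpace

/-- The largest eigenvalue of a real symmetric matrix, characterized as the supremum of
Rayleigh quotients over unit vectors. -/
noncomputable def lambdaMax {d : ℕ} (A : Matrix (Fin d) (Fin d) ℝ) : ℝ :=
  ⨆ v : {v : Fin d → ℝ // ∑ i, v i ^ 2 = 1}, v.1 ⬝ᵥ A.mulVec v.1

lemma aux_key (P Q : ℝ) (hP : 0 ≤ P) (hQ : 0 ≤ Q) :
    (Real.sqrt P + Real.sqrt Q)^2 ≤ (P ^ ((1:ℝ)/3) + Q ^ ((1:ℝ)/3))^3 := by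
  have hp : (0:ℝ) ≤ P ^ ((1:ℝ)/6) := Real.rpow_nonneg hP _
  have hq : (0:ℝ) ≤ Q ^ ((1:ℝ)/6) := Real.rpow_nonneg hQ _
  set p := P ^ ((1:ℝ)/6) with hpdef
  set q := Q ^ ((1:ℝ)/6) with hqdef
  have h1 : Real.sqrt P = p ^ 3 := by
    rw [hpdef, ← Real.rpow_natCast (P ^ ((1:ℝ)/6)) 3, ← Real.rpow_mul hP,
      Real.sqrt_eq_rpow]; norm_num
  have h2 : Real.sqrt Q = q ^ 3 := by
    rw [hqdef, ← Real.rpow_natCast (Q ^ ((1:ℝ)/6)) 3, ← Real.rpow_mul hQ,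
      Real.sqrt_eq_rpow]; norm_num
  have h3 : P ^ ((1:ℝ)/3) = p ^ 2 := by
    rw [hpdef, ← Real.rpow_natCast (P ^ ((1:ℝ)/6)) 2, ← Real.rpow_mul hP]; norm_num
  have h4 : Q ^ ((1:ℝ)/3) = q ^ 2 := by
    rw [hqdef, ← Real.rpow_natCast (Q ^ ((1:ℝ)/6)) 2, ← Real.rpow_mul hQ]; norm_num
  rw [h1, h2, h3, h4]
  nlinarith [mul_nonneg (sq_nonneg (p*q)) (sq_nonneg (p-q)),
    mul_nonneg (mul_nonneg (mul_nonneg hp hp) (mul_nonneg hp hp)) (mul_nonneg hq hq),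
    mul_nonneg (mul_nonneg (mul_nonneg hq hq) (mul_nonneg hq hq)) (mul_nonneg hp hp)]

lemma aux_texp (β t : ℝ) (hβ : 0 < β) :
    |t| * Real.exp (-(β/2) * t^2) ≤ Real.sqrt (1/(β * Real.exp 1)) := by
  have he : (0:ℝ) < Real.exp 1 := Real.exp_pos 1
  rw [show |t| * Real.exp (-(β/2) * t^2) = Real.sqrt ((|t| * Real.exp (-(β/2)*t^2))^2) from
    (Real.sqrt_sq (by positivity)).symm]
  apply Real.sqrt_le_sqrt
  have h1 : β * t^2 * Real.exp 1 ≤ Real.exp (β * t^2) := by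
    have := Real.add_one_le_exp (β * t^2 - 1)
    calc β * t^2 * Real.exp 1 ≤ Real.exp (β*t^2 - 1) * Real.exp 1 := by nlinarith
      _ = Real.exp (β * t^2) := by rw [← Real.exp_add]; ring_nf
  have h2 : (|t| * Real.exp (-(β/2)*t^2))^2 = t^2 / Real.exp (β * t^2) := by
    rw [mul_pow, sq_abs, ← Real.exp_nat_mul,
      show ((2:ℕ):ℝ) * (-(β/2)*t^2) = -(β*t^2) by push_cast; ring,
      Real.exp_neg, div_eq_mul_inv]
  rw [h2, div_le_div_iff₀ (Real.exp_pos _) (by positivity)]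
  nlinarith [h1]

lemma rayleigh_le {d : ℕ} (A : Matrix (Fin d) (Fin d) ℝ) (v : Fin d → ℝ)
    (hv : ∑ i, v i ^ 2 = 1) : v ⬝ᵥ A.mulVec v ≤ lambdaMax A := by
  have hbdd : BddAbove (Set.range fun w : {v : Fin d → ℝ // ∑ i, v i ^ 2 = 1} =>
      w.1 ⬝ᵥ A.mulVec w.1) := by
    refine ⟨∑ a, ∑ c, |A a c|, ?_⟩
    rintro y ⟨⟨w, hw⟩, rfl⟩
    have habs : ∀ a, |w a| ≤ 1 := by
      intro a
      exact (sq_le_one_iff_abs_le_one _).mp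
        (hw ▸ Finset.single_le_sum (fun i _ => sq_nonneg (w i)) (Finset.mem_univ a))
    simp only [dotProduct, Matrix.mulVec, Finset.mul_sum]
    apply Finset.sum_le_sum; intro a _
    apply Finset.sum_le_sum; intro c _
    calc w a * (A a c * w c) ≤ |w a * (A a c * w c)| := le_abs_self _
      _ = |w a| * |A a c| * |w c| := by rw [abs_mul, abs_mul]; ring
      _ ≤ 1 * |A a c| * 1 := by
          apply mul_le_mul (mul_le_mul (habs a) le_rfl (abs_nonneg _) (by norm_num))
            (habs c) (abs_nonneg _) (by positivity)
      _ = |A a c| := by ring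
  exact le_ciSup hbdd ⟨v, hv⟩

lemma quad_eq {d B : ℕ} (v : Fin d → ℝ) (x : Fin B → Fin d → ℝ)
    (XB : Matrix (Fin d) (Fin d) ℝ)
    (hXB : ∀ a c, XB a c = ∑ i, x i a * x i c) :
    v ⬝ᵥ XB.mulVec v = ∑ i, (∑ j, v j * x i j)^2 := by
  calc v ⬝ᵥ XB.mulVec v = ∑ a, ∑ c, ∑ i, v a * (x i a * x i c * v c) := by
        simp only [dotProduct, Matrix.mulVec, hXB, Finset.mul_sum, Finset.sum_mul]
    _ = ∑ i, ∑ a, ∑ c, v a * (x i a * x i c * v c) := by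
        rw [show (∑ a, ∑ c, ∑ i, v a * (x i a * x i c * v c))
            = ∑ a, ∑ i, ∑ c, v a * (x i a * x i c * v c) from
          Finset.sum_congr rfl fun a _ => Finset.sum_comm]
        exact Finset.sum_comm
    _ = ∑ i, (∑ j, v j * x i j)^2 := by
        apply Finset.sum_congr rfl; intro i _
        rw [sq, Finset.sum_mul_sum]
        apply Finset.sum_congr rfl; intro a _
        apply Finset.sum_congr rfl; intro c _
        ring

lemma sum_inner_sq_le {d B : ℕ} (Δ : EuclideanSpace ℝ (Fin d))
    (x : Fin B → EuclideanSpace ℝ (Fin d))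
    (XB : Matrix (Fin d) (Fin d) ℝ)
    (hXB : ∀ a c, XB a c = ∑ i, x i a * x i c) :
    ∑ i, (∑ j, Δ j * x i j)^2 ≤ ‖Δ‖^2 * lambdaMax XB := by
  have hnorm : ∑ j, (Δ j)^2 = ‖Δ‖^2 := by
    rw [EuclideanSpace.norm_eq, Real.sq_sqrt (Finset.sum_nonneg fun i _ => sq_nonneg _)]
    simp [Real.norm_eq_abs, sq_abs]
  rcases eq_or_ne Δ 0 with hΔ | hΔ
  · subst hΔ; simp
  · have hn : (0:ℝ) < ‖Δ‖ := norm_pos_iff.mpr hΔ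
    set v : Fin d → ℝ := fun j => Δ j / ‖Δ‖ with hv
    have hunit : ∑ j, v j ^ 2 = 1 := by
      simp only [hv, div_pow, ← Finset.sum_div, hnorm]
      field_simp
    have hray := rayleigh_le XB v hunit
    have hquad : v ⬝ᵥ XB.mulVec v = ∑ i, (∑ j, v j * x i j)^2 :=
      quad_eq v (fun i j => x i j) XB hXB
    have hscale : ∀ i, (∑ j, v j * x i j)^2 = (∑ j, Δ j * x i j)^2 / ‖Δ‖^2 := by
      intro i
      simp only [hv, div_mul_eq_mul_div, ← Finset.sum_div, div_pow]
    calc ∑ i, (∑ j, Δ j * x i j)^2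
        = ‖Δ‖^2 * ∑ i, (∑ j, v j * x i j)^2 := by
          rw [Finset.mul_sum]; apply Finset.sum_congr rfl; intro i _
          rw [hscale i]; field_simp
      _ ≤ ‖Δ‖^2 * lambdaMax XB := by
          rw [← hquad]; exact mul_le_mul_of_nonneg_left hray (by positivity)

/-- Deterministic bound on the total squared weighted corruption `‖S_B b‖₂²` in robust
least squares regression. -/
theorem stmt10
    {d B : ℕ} (β : ℝ) (hβ : 0 < β)
    (Δ : EuclideanSpace ℝ (Fin d))
    (x : Fin B → EuclideanSpace ℝ (Fin d)) (b : Fin B → ℝ)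
    (s : Fin B → ℝ)
    (hs : ∀ i, s i = Real.sqrt (β / (2 * π)) *
      Real.exp (-(β / 2) * (b i - ⟪Δ, x i⟫) ^ 2))
    (XB : Matrix (Fin d) (Fin d) ℝ)
    (hXB : ∀ a c, XB a c = ∑ i, x i a * x i c) :
    ∑ i, (s i * b i) ^ 2 ≤
      ((β * ‖Δ‖ ^ 2 * lambdaMax XB / (2 * π)) ^ ((1 : ℝ) / 3)
        + ((B : ℝ) / (2 * π * Real.exp 1)) ^ ((1 : ℝ) / 3)) ^ 3 := by
  have hπ : (0:ℝ) < π := Real.pi_pos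
  have he : (0:ℝ) < Real.exp 1 := Real.exp_pos 1
  set a : Fin B → ℝ := fun i => ∑ j, Δ j * x i j with ha
  have hinner : ∀ i, ⟪Δ, x i⟫ = a i := by
    intro i
    simp [ha, PiLp.inner_apply, RCLike.inner_apply]
    exact Finset.sum_congr rfl fun j _ => mul_comm _ _
  set k : ℝ := Real.sqrt (β / (2 * π)) with hk
  set c : ℝ := Real.sqrt (1 / (2 * π * Real.exp 1)) with hc
  have hknn : 0 ≤ k := Real.sqrt_nonneg _
  have hcnn : 0 ≤ c := Real.sqrt_nonneg _
  have hk2 : k ^ 2 = β / (2 * π) := Real.sq_sqrt (by positivity)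
  have hc2 : c ^ 2 = 1 / (2 * π * Real.exp 1) := Real.sq_sqrt (by positivity)
  -- pointwise bound
  have h1 : ∀ i, (s i * b i) ^ 2 ≤ (k * |a i| + c) ^ 2 := by
    intro i
    have hsnn : 0 ≤ s i := by rw [hs i]; positivity
    have habs : |s i * b i| ≤ k * |a i| + c := by
      have hb : b i = a i + (b i - a i) := by ring
      have hstep : |s i * b i| ≤ s i * |a i| + s i * |b i - a i| := by
        rw [abs_mul, abs_of_nonneg hsnn]
        calc s i * |b i| = s i * |a i + (b i - a i)| := by rw [← hb]
          _ ≤ s i * (|a i| + |b i - a i|) :=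
              mul_le_mul_of_nonneg_left (abs_add_le _ _) hsnn
          _ = s i * |a i| + s i * |b i - a i| := by ring
      have hsle : s i ≤ k := by
        rw [hs i, hinner i]
        calc k * Real.exp (-(β / 2) * (b i - a i) ^ 2)
            ≤ k * 1 := mul_le_mul_of_nonneg_left
              (Real.exp_le_one_iff.mpr (by nlinarith [sq_nonneg (b i - a i)])) hknn
          _ = k := mul_one k
      have hterm : s i * |b i - a i| ≤ c := by
        rw [hs i, hinner i]
        calc k * Real.exp (-(β / 2) * (b i - a i) ^ 2) * |b i - a i|
            = k * (|b i - a i| * Real.exp (-(β / 2) * (b i - a i) ^ 2)) := by ring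
          _ ≤ k * Real.sqrt (1 / (β * Real.exp 1)) :=
              mul_le_mul_of_nonneg_left (aux_texp β (b i - a i) hβ) hknn
          _ = c := by
              rw [hk, hc, ← Real.sqrt_mul (by positivity)]
              congr 1
              field_simp
      calc |s i * b i| ≤ s i * |a i| + s i * |b i - a i| := hstep
        _ ≤ k * |a i| + c := add_le_add
            (mul_le_mul_of_nonneg_right hsle (abs_nonneg _)) hterm
    calc (s i * b i) ^ 2 = |s i * b i| ^ 2 := (sq_abs _).symm
      _ ≤ (k * |a i| + c) ^ 2 := by
          apply pow_le_pow_left₀ (abs_nonneg _) habs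
  set P : ℝ := β * ‖Δ‖ ^ 2 * lambdaMax XB / (2 * π) with hP
  set Q : ℝ := (B : ℝ) / (2 * π * Real.exp 1) with hQ
  have hsum_a : ∑ i, (a i) ^ 2 ≤ ‖Δ‖ ^ 2 * lambdaMax XB := sum_inner_sq_le Δ x XB hXB
  have hΛnn : 0 ≤ ‖Δ‖ ^ 2 * lambdaMax XB :=
    le_trans (Finset.sum_nonneg fun i _ => sq_nonneg (a i)) hsum_a
  have hPnn : 0 ≤ P := by
    have hnum : 0 ≤ β * (‖Δ‖ ^ 2 * lambdaMax XB) := mul_nonneg hβ.le hΛnn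
    rw [hP]
    apply div_nonneg (by nlinarith) (by positivity)
  have hQnn : 0 ≤ Q := by positivity
  set U : ℝ := ∑ i, (k * |a i|) ^ 2 with hU
  set T : ℝ := ∑ i, k * |a i| with hT
  have hUnn : 0 ≤ U := Finset.sum_nonneg fun i _ => sq_nonneg _
  have hTnn : 0 ≤ T := Finset.sum_nonneg fun i _ => by positivity
  have hUP : U ≤ P := by
    have : U = k ^ 2 * ∑ i, (a i) ^ 2 := by
      rw [hU, Finset.mul_sum]
      exact Finset.sum_congr rfl fun i _ => by rw [mul_pow, sq_abs]
    rw [this, hk2, hP]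
    rw [div_mul_eq_mul_div, div_le_div_iff₀ (by positivity) (by positivity)]
    nlinarith [mul_le_mul_of_nonneg_left hsum_a (le_of_lt hβ)]
  have hCS : T ^ 2 ≤ U * B := by
    have := Finset.sum_mul_sq_le_sq_mul_sq Finset.univ (fun i => k * |a i|) (fun _ => (1:ℝ))
    simpa [hT, hU] using this
  have hTle : T ≤ Real.sqrt U * Real.sqrt B := by
    rw [← Real.sqrt_mul hUnn]
    calc T = Real.sqrt (T ^ 2) := (Real.sqrt_sq hTnn).symm
      _ ≤ Real.sqrt (U * B) := Real.sqrt_le_sqrt hCS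
  have hsqrtU : Real.sqrt U ≤ Real.sqrt P := Real.sqrt_le_sqrt hUP
  have hsqrtQ : Real.sqrt Q = Real.sqrt B * c := by
    rw [hQ, hc, ← Real.sqrt_mul (Nat.cast_nonneg B), div_eq_mul_inv, one_div]
  have hsum2 : ∑ i, (k * |a i| + c) ^ 2 ≤ (Real.sqrt P + Real.sqrt Q) ^ 2 := by
    have hexpand : ∑ i, (k * |a i| + c) ^ 2 = U + 2 * c * T + B * c ^ 2 := by
      have h : ∀ i : Fin B, (k * |a i| + c) ^ 2
          = (k * |a i|) ^ 2 + 2 * c * (k * |a i|) + c ^ 2 := fun i => by ring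
      rw [Finset.sum_congr rfl fun i _ => h i, Finset.sum_add_distrib,
        Finset.sum_add_distrib, ← Finset.mul_sum, Finset.sum_const,
        Finset.card_univ, Fintype.card_fin, nsmul_eq_mul, hU, hT]
    have hBc : (B : ℝ) * c ^ 2 = Q := by
      rw [hc2, hQ]; field_simp
    rw [hexpand, hBc]
    have hPQ : Real.sqrt P ^ 2 = P := Real.sq_sqrt hPnn
    have hsB : (0:ℝ) ≤ Real.sqrt B := Real.sqrt_nonneg _
    have hsP : (0:ℝ) ≤ Real.sqrt P := Real.sqrt_nonneg _
    have hsU : (0:ℝ) ≤ Real.sqrt U := Real.sqrt_nonneg _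
    have hU2 : Real.sqrt U ^ 2 = U := Real.sq_sqrt hUnn
    have h2cT : 2 * c * T ≤ 2 * c * (Real.sqrt P * Real.sqrt B) := by
      apply mul_le_mul_of_nonneg_left _ (by positivity)
      exact le_trans hTle (mul_le_mul_of_nonneg_right hsqrtU hsB)
    rw [hsqrtQ]
    have hB2 : Real.sqrt (B:ℝ) ^ 2 = (B:ℝ) := Real.sq_sqrt (Nat.cast_nonneg B)
    have hrhs : (Real.sqrt P + Real.sqrt (B:ℝ) * c) ^ 2
        = P + 2 * c * (Real.sqrt P * Real.sqrt (B:ℝ)) + (B:ℝ) * c ^ 2 := by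
      rw [add_sq, hPQ, mul_pow, hB2]; ring
    rw [hrhs, hBc]
    linarith [h2cT, hUP]
  calc ∑ i, (s i * b i) ^ 2 ≤ ∑ i, (k * |a i| + c) ^ 2 :=
        Finset.sum_le_sum fun i _ => h1 i
    _ ≤ (Real.sqrt P + Real.sqrt Q) ^ 2 := hsum2
    _ ≤ (P ^ ((1:ℝ)/3) + Q ^ ((1:ℝ)/3)) ^ 3 := aux_key P Q hPnn hQnn
end

section
/- For all reals p > 0 and q > 0, the function g(k) = q·k² + p·k²/(k−1)² on the interval (1, ∞) attains its minimum at k = 1 + (p/q)^{1/3}, and the minimum value equals (q^{1/3} + p^{1/3})³. -/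
open Real Set

/-- For `p, q > 0`, the function `g(k) = q·k² + p·k²/(k−1)²` on `(1, ∞)` attains its
minimum at `k = 1 + (p/q)^{1/3}`, and the minimum value equals `(q^{1/3} + p^{1/3})³`. -/
theorem stmt11 (p q : ℝ) (hp : 0 < p) (hq : 0 < q) :
    (∀ k ∈ Ioi (1 : ℝ),
      (q ^ ((1 : ℝ) / 3) + p ^ ((1 : ℝ) / 3)) ^ 3 ≤
        q * k ^ 2 + p * k ^ 2 / (k - 1) ^ 2) ∧
    (1 + (p / q) ^ ((1 : ℝ) / 3) ∈ Ioi (1 : ℝ)) ∧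
    (q * (1 + (p / q) ^ ((1 : ℝ) / 3)) ^ 2 +
        p * (1 + (p / q) ^ ((1 : ℝ) / 3)) ^ 2 / ((1 + (p / q) ^ ((1 : ℝ) / 3)) - 1) ^ 2
      = (q ^ ((1 : ℝ) / 3) + p ^ ((1 : ℝ) / 3)) ^ 3) := by
  set a := q ^ ((1 : ℝ) / 3) with hadef
  set b := p ^ ((1 : ℝ) / 3) with hbdef
  have ha : 0 < a := Real.rpow_pos_of_pos hq _
  have hb : 0 < b := Real.rpow_pos_of_pos hp _
  have ha3 : a ^ 3 = q := by
    rw [hadef, ← Real.rpow_natCast (q ^ ((1 : ℝ) / 3)) 3, ← Real.rpow_mul hq.le]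
    norm_num
  have hb3 : b ^ 3 = p := by
    rw [hbdef, ← Real.rpow_natCast (p ^ ((1 : ℝ) / 3)) 3, ← Real.rpow_mul hp.le]
    norm_num
  have hdiv : (p / q) ^ ((1 : ℝ) / 3) = b / a := by
    rw [Real.div_rpow hp.le hq.le, hadef, hbdef]
  refine ⟨?_, ?_, ?_⟩
  · intro k hk
    have hk1 : (1 : ℝ) < k := hk
    have ht : 0 < k - 1 := by linarith
    have ht2 : 0 < (k - 1) ^ 2 := by positivity
    rw [← ha3, ← hb3]
    have heq : a ^ 3 * k ^ 2 + b ^ 3 * k ^ 2 / (k - 1) ^ 2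
        = (a ^ 3 * k ^ 2 * (k - 1) ^ 2 + b ^ 3 * k ^ 2) / (k - 1) ^ 2 := by
      field_simp
    rw [heq, le_div_iff₀ ht2]
    nlinarith [mul_nonneg (sq_nonneg (a * (k - 1) - b))
      (show (0 : ℝ) ≤ a * (k - 1) ^ 2 + 2 * (a + b) * (k - 1) + b by positivity),
      sq_nonneg (a * (k - 1) - b), ht.le, ha.le, hb.le]
  · have : 0 < (p / q) ^ ((1 : ℝ) / 3) := Real.rpow_pos_of_pos (div_pos hp hq) _
    simpa using this
  · rw [hdiv, ← ha3, ← hb3]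
    have h1 : 1 + b / a - 1 = b / a := by ring
    rw [h1]
    field_simp
end

section
/- Let β > 0, τ ≥ 0, and let Δ¹, Δ² ∈ ℝ^d satisfy ‖Δ¹‖₂ ≤ 1/√β, ‖Δ²‖₂ ≤ 1/√β and ‖Δ¹ − Δ²‖₂ ≤ τ. Then for every ε ∈ ℝ^d, | exp(−(β/2)‖ε − Δ¹‖₂²) − exp(−(β/2)‖ε − Δ²‖₂²) | ≤ 3τ·(β‖ε‖₂ + 2√β). -/
open Real

lemma exp_neg_lip (a b : ℝ) (ha : 0 ≤ a) (hb : 0 ≤ b) :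
    |Real.exp (-a) - Real.exp (-b)| ≤ |a - b| := by
  wlog h : b ≤ a generalizing a b
  · rw [abs_sub_comm, abs_sub_comm a b]
    exact this b a hb ha (le_of_not_ge h)
  have h1 : Real.exp (-a) ≤ Real.exp (-b) := Real.exp_le_exp.2 (by linarith)
  rw [abs_of_nonpos (by linarith), abs_of_nonneg (by linarith)]
  have h2 : Real.exp (-a) = Real.exp (-b) * Real.exp (b - a) := by
    rw [← Real.exp_add]; ring_nf
  have h3 := Real.add_one_le_exp (b - a)
  have h4 : Real.exp (-b) ≤ 1 := Real.exp_le_one_iff.2 (by linarith)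
  nlinarith [Real.exp_pos (-b)]

/-- Lipschitz bound on the Gaussian SVAM weights as a function of the error vector:
if `‖Δ¹‖, ‖Δ²‖ ≤ 1/√β` and `‖Δ¹ − Δ²‖ ≤ τ`, then for every `ε`,
`|exp(−(β/2)‖ε−Δ¹‖²) − exp(−(β/2)‖ε−Δ²‖²)| ≤ 3τ(β‖ε‖ + 2√β)`. -/
theorem stmt13
    {d : ℕ} (β τ : ℝ) (hβ : 0 < β) (hτ : 0 ≤ τ)
    (Δ₁ Δ₂ : EuclideanSpace ℝ (Fin d))
    (hΔ₁ : ‖Δ₁‖ ≤ 1 / Real.sqrt β) (hΔ₂ : ‖Δ₂‖ ≤ 1 / Real.sqrt β)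
    (hΔ : ‖Δ₁ - Δ₂‖ ≤ τ)
    (ε : EuclideanSpace ℝ (Fin d)) :
    |Real.exp (-(β / 2) * ‖ε - Δ₁‖ ^ 2) - Real.exp (-(β / 2) * ‖ε - Δ₂‖ ^ 2)| ≤
      3 * τ * (β * ‖ε‖ + 2 * Real.sqrt β) := by
  have hsb : 0 < Real.sqrt β := Real.sqrt_pos.2 hβ
  have hsq : Real.sqrt β * Real.sqrt β = β := Real.mul_self_sqrt hβ.le
  have h1 : |Real.exp (-(β / 2) * ‖ε - Δ₁‖ ^ 2) - Real.exp (-(β / 2) * ‖ε - Δ₂‖ ^ 2)| ≤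
      |β / 2 * ‖ε - Δ₁‖ ^ 2 - β / 2 * ‖ε - Δ₂‖ ^ 2| := by
    have := exp_neg_lip (β / 2 * ‖ε - Δ₁‖ ^ 2) (β / 2 * ‖ε - Δ₂‖ ^ 2)
      (by positivity) (by positivity)
    simpa [neg_mul] using this
  have hn1 : ‖ε - Δ₁‖ ≤ ‖ε‖ + 1 / Real.sqrt β := by
    calc ‖ε - Δ₁‖ ≤ ‖ε‖ + ‖Δ₁‖ := norm_sub_le _ _
      _ ≤ _ := by linarith
  have hn2 : ‖ε - Δ₂‖ ≤ ‖ε‖ + 1 / Real.sqrt β := by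
    calc ‖ε - Δ₂‖ ≤ ‖ε‖ + ‖Δ₂‖ := norm_sub_le _ _
      _ ≤ _ := by linarith
  have hd : |‖ε - Δ₁‖ - ‖ε - Δ₂‖| ≤ τ := by
    calc |‖ε - Δ₁‖ - ‖ε - Δ₂‖| ≤ ‖(ε - Δ₁) - (ε - Δ₂)‖ := abs_norm_sub_norm_le _ _
      _ = ‖Δ₂ - Δ₁‖ := by congr 1; abel
      _ = ‖Δ₁ - Δ₂‖ := norm_sub_rev _ _
      _ ≤ τ := hΔ
  have habs : |β / 2 * ‖ε - Δ₁‖ ^ 2 - β / 2 * ‖ε - Δ₂‖ ^ 2| =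
      β / 2 * |‖ε - Δ₁‖ - ‖ε - Δ₂‖| * (‖ε - Δ₁‖ + ‖ε - Δ₂‖) := by
    have e : β / 2 * ‖ε - Δ₁‖ ^ 2 - β / 2 * ‖ε - Δ₂‖ ^ 2 =
        (β / 2) * ((‖ε - Δ₁‖ - ‖ε - Δ₂‖) * (‖ε - Δ₁‖ + ‖ε - Δ₂‖)) := by ring
    rw [e, abs_mul, abs_mul, abs_of_nonneg (by positivity : (0:ℝ) ≤ β / 2),
      abs_of_nonneg (show (0:ℝ) ≤ ‖ε - Δ₁‖ + ‖ε - Δ₂‖ by positivity)]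
    ring
  have h2 : β / 2 * |‖ε - Δ₁‖ - ‖ε - Δ₂‖| * (‖ε - Δ₁‖ + ‖ε - Δ₂‖) ≤
      β / 2 * τ * (2 * (‖ε‖ + 1 / Real.sqrt β)) := by
    apply mul_le_mul
    · exact mul_le_mul_of_nonneg_left hd (by positivity)
    · linarith
    · positivity
    · positivity
  have h3 : β / 2 * τ * (2 * (‖ε‖ + 1 / Real.sqrt β)) = τ * (β * ‖ε‖ + Real.sqrt β) := by
    field_simp
    nlinarith [hsq]
  have h4 : τ * (β * ‖ε‖ + Real.sqrt β) ≤ 3 * τ * (β * ‖ε‖ + 2 * Real.sqrt β) := by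
    nlinarith [mul_nonneg hτ (mul_nonneg hβ.le (norm_nonneg ε)), mul_nonneg hτ hsb.le]
  linarith
end

section
/- Let 0 < φ < 1 and η > 0. Then the function y ↦ f(y; η, φ) on (0, ∞) attains its unique maximum at y = (1−φ)/η. Consequently, for every β > 0, with φ̃_β = φ/(φ + β(1−φ)) and η̃_β = η·β/(φ + β(1−φ)), the density f(·; η̃_β, φ̃_β) also attains its unique maximum at y = (1−φ)/η; i.e., the variance-altering transformation of the gamma distribution is mode-preserving. -/
open Real MeasureTheory Set

/-- The gamma density in the GLM parametrization:
`f(y; η, φ) = (1/(y·Γ(1/φ)))·(yη/φ)^{1/φ}·exp(−yη/φ)` for `y > 0`. -/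
noncomputable def gammaGLMDensity (η φ y : ℝ) : ℝ :=
  1 / (y * Real.Gamma (1 / φ)) * (y * η / φ) ^ (1 / φ) * Real.exp (-(y * η / φ))

lemma gammaGLM_eq (η φ y : ℝ) (hφ : 0 < φ) (hη : 0 < η) (hy : 0 < y) :
    gammaGLMDensity η φ y =
      (1 / Real.Gamma (1 / φ)) * (η / φ) ^ (1 / φ) *
        Real.exp ((1 / φ - 1) * Real.log y - (η / φ) * y) := by
  have hyφ : (0:ℝ) ≤ y := hy.le
  have hηφ : (0:ℝ) ≤ η / φ := by positivity
  have h1 : y * η / φ = y * (η / φ) := by ring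
  rw [gammaGLMDensity, h1, Real.mul_rpow hyφ hηφ, Real.rpow_def_of_pos hy]
  rw [show (1 / φ - 1) * Real.log y - η / φ * y
      = (Real.log y * (1 / φ) + -(y * (η / φ))) - Real.log y by ring]
  rw [Real.exp_sub, Real.exp_add, Real.exp_log hy]
  field_simp

lemma key_ineq (a c y m : ℝ) (ha : 0 < a) (hy : 0 < y) (hm : 0 < m) (hne : y ≠ m)
    (hcm : c * m = a) :
    a * Real.log y - c * y < a * Real.log m - c * m := by
  have ht : 0 < y / m := div_pos hy hm
  have htne : y / m ≠ 1 := by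
    intro h; exact hne (by field_simp at h; linarith)
  have hlog := Real.log_lt_sub_one_of_pos ht htne
  have hly : Real.log y = Real.log m + Real.log (y / m) := by
    rw [Real.log_div hy.ne' hm.ne']; ring
  have hcy : c * y = a * (y / m) := by
    rw [← hcm]; field_simp
  rw [hly, hcy, hcm]
  nlinarith [mul_lt_mul_of_pos_left hlog ha]

lemma gamma_mode (φ η : ℝ) (hφ : 0 < φ) (hφ1 : φ < 1) (hη : 0 < η) :
    ∀ y ∈ Ioi (0:ℝ), y ≠ (1 - φ) / η →
      gammaGLMDensity η φ y < gammaGLMDensity η φ ((1 - φ) / η) := by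
  intro y hy hne
  have hy0 : 0 < y := hy
  have hm : 0 < (1 - φ) / η := div_pos (by linarith) hη
  rw [gammaGLM_eq η φ y hφ hη hy0, gammaGLM_eq η φ _ hφ hη hm]
  have hK : 0 < (1 / Real.Gamma (1 / φ)) * (η / φ) ^ (1 / φ) := by
    have := Real.Gamma_pos_of_pos (show (0:ℝ) < 1/φ by positivity)
    positivity
  apply mul_lt_mul_of_pos_left _ hK
  apply Real.exp_lt_exp.mpr
  apply key_ineq _ _ _ _ (by rw [sub_pos]; exact (one_lt_div hφ).mpr hφ1) hy0 hm hne
  field_simp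

/-- The gamma density attains its unique maximum on `(0,∞)` at `y = (1−φ)/η`, and the
variance-altering transformation is mode-preserving: `(1−φ̃_β)/η̃_β = (1−φ)/η` and the
variance-altered density also attains its unique maximum at `(1−φ)/η`. -/
theorem stmt16
    (φ η : ℝ) (hφ : 0 < φ) (hφ1 : φ < 1) (hη : 0 < η) :
    (∀ y ∈ Ioi (0:ℝ), y ≠ (1 - φ) / η →
      gammaGLMDensity η φ y < gammaGLMDensity η φ ((1 - φ) / η)) ∧
    ∀ β : ℝ, 0 < β →
      (1 - φ / (φ + β * (1 - φ))) / (η * β / (φ + β * (1 - φ))) = (1 - φ) / η ∧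
      ∀ y ∈ Ioi (0:ℝ), y ≠ (1 - φ) / η →
        gammaGLMDensity (η * β / (φ + β * (1 - φ))) (φ / (φ + β * (1 - φ))) y <
          gammaGLMDensity (η * β / (φ + β * (1 - φ))) (φ / (φ + β * (1 - φ)))
            ((1 - φ) / η) := by
  refine ⟨gamma_mode φ η hφ hφ1 hη, ?_⟩
  intro β hβ
  have hD : 0 < φ + β * (1 - φ) := by nlinarith
  have hident : (1 - φ / (φ + β * (1 - φ))) / (η * β / (φ + β * (1 - φ))) = (1 - φ) / η := by
    rw [div_eq_div_iff (by positivity) hη.ne']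
    field_simp
    ring
  refine ⟨hident, ?_⟩
  have hφ' : 0 < φ / (φ + β * (1 - φ)) := by positivity
  have hφ'1 : φ / (φ + β * (1 - φ)) < 1 := by
    rw [div_lt_one hD]; nlinarith
  have hη' : 0 < η * β / (φ + β * (1 - φ)) := by positivity
  have := gamma_mode _ _ hφ' hφ'1 hη'
  rw [hident] at this
  exact this
end
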